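/- In the asymptotic Bernoulli setting, assume there exists c₃ > 0 with m(n)·p(n) ≥ c₃·log n for all large n (dense regime). Let X_1, …, X_n be i.i.d. Binomial(m,p). Then there exists a constant c₂ > 0 such that for all sufficiently large n, m·p ≤ E[ max_{i∈[n]} X_i ] ≤ c₂·m·p. -/

import Mathlib

open Classical Finset

/-- Probability weight of `n` independent rows of `m` i.i.d. Bernoulli(p) trials;
row `i` realizes the Binomial(m,p) variable `X i`. -/
noncomputable def bWeight (n m : ℕ) (p : ℝ) (ω : Fin n → Fin m → Bool) : ℝ :=
  ∏ i : Fin n, ∏ j : Fin m, if ω i j then p else 1 - p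

/-- Probability of an event for `n` i.i.d. Binomial(m,p) variables. -/
noncomputable def bProb (n m : ℕ) (p : ℝ) (P : (Fin n → Fin m → Bool) → Prop) : ℝ :=
  ∑ ω : Fin n → Fin m → Bool, if P ω then bWeight n m p ω else 0

/-- `X i`: the `i`-th Binomial(m,p) variable (number of successes in row `i`). -/
def Xvar {n m : ℕ} (ω : Fin n → Fin m → Bool) (i : Fin n) : ℕ :=
  (Finset.univ.filter fun j : Fin m => ω i j = true).card

/-- `max_{i ∈ [n]} X_i`. -/
def maxX {n m : ℕ} (ω : Fin n → Fin m → Bool) : ℕ :=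
  Finset.univ.sup (Xvar ω)

/-- `E[max_{i ∈ [n]} X_i]` for `n` i.i.d. Binomial(m,p) variables. -/
noncomputable def expMax (n m : ℕ) (p : ℝ) : ℝ :=
  ∑ ω : Fin n → Fin m → Bool, bWeight n m p ω * (maxX ω : ℝ)

lemma sum_prod_prod (n m : ℕ) (F : Fin n → Fin m → Bool → ℝ) :
    ∑ ω : Fin n → Fin m → Bool, ∏ i, ∏ j, F i j (ω i j)
      = ∏ i, ∏ j, (F i j true + F i j false) := by
  rw [← Fintype.prod_sum (fun i (η : Fin m → Bool) => ∏ j, F i j (η j))]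
  congr 1
  ext i
  rw [← Fintype.prod_sum (fun j (b : Bool) => F i j b)]
  congr 1; ext j
  simp [Fintype.sum_bool]

section
variable {n m : ℕ} {p : ℝ}

lemma bWeight_nonneg (hp0 : 0 ≤ p) (hp1 : p ≤ 1) (ω : Fin n → Fin m → Bool) :
    0 ≤ bWeight n m p ω := by
  unfold bWeight
  refine Finset.prod_nonneg fun i _ => Finset.prod_nonneg fun j _ => ?_
  by_cases h : ω i j <;> simp [h] <;> linarith

lemma sum_bWeight (hp0 : 0 ≤ p) (hp1 : p ≤ 1) :
    ∑ ω : Fin n → Fin m → Bool, bWeight n m p ω = 1 := by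
  unfold bWeight
  rw [sum_prod_prod n m (fun i j b => if b then p else 1 - p)]
  simp

lemma bProb_nonneg (hp0 : 0 ≤ p) (hp1 : p ≤ 1) (P : (Fin n → Fin m → Bool) → Prop) :
    0 ≤ bProb n m p P := by
  refine Finset.sum_nonneg fun ω _ => ?_
  by_cases h : P ω <;> simp [h, bWeight_nonneg hp0 hp1]

lemma bProb_mono (hp0 : 0 ≤ p) (hp1 : p ≤ 1) {P Q : (Fin n → Fin m → Bool) → Prop}
    (h : ∀ ω, P ω → Q ω) : bProb n m p P ≤ bProb n m p Q := by
  refine Finset.sum_le_sum fun ω _ => ?_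
  by_cases hP : P ω
  · simp [hP, h ω hP]
  · by_cases hQ : Q ω <;> simp [hP, hQ, bWeight_nonneg hp0 hp1]

lemma bProb_le_one (hp0 : 0 ≤ p) (hp1 : p ≤ 1) (P : (Fin n → Fin m → Bool) → Prop) :
    bProb n m p P ≤ 1 := by
  rw [← sum_bWeight (n := n) (m := m) hp0 hp1]
  refine Finset.sum_le_sum fun ω _ => ?_
  by_cases h : P ω <;> simp [h, bWeight_nonneg hp0 hp1]

lemma bProb_exists_le (hp0 : 0 ≤ p) (hp1 : p ≤ 1) {α : Type*} (s : Finset α)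
    (Q : α → (Fin n → Fin m → Bool) → Prop) :
    bProb n m p (fun ω => ∃ a ∈ s, Q a ω) ≤ ∑ a ∈ s, bProb n m p (Q a) := by
  unfold bProb
  beta_reduce
  rw [Finset.sum_comm]
  refine Finset.sum_le_sum fun ω _ => ?_
  by_cases h : ∃ a ∈ s, Q a ω
  · rw [if_pos h]
    obtain ⟨a, ha, hQ⟩ := h
    have hs := Finset.single_le_sum (f := fun b => if Q b ω then bWeight n m p ω else 0)
      (fun b _ => by by_cases hb : Q b ω <;> simp [hb, bWeight_nonneg hp0 hp1]) ha
    simpa [if_pos hQ] using hs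
  · rw [if_neg h]
    refine Finset.sum_nonneg fun b _ => ?_
    by_cases hb : Q b ω <;> simp [hb, bWeight_nonneg hp0 hp1]

lemma bProb_forall_true (hp0 : 0 ≤ p) (hp1 : p ≤ 1) (i : Fin n) (S : Finset (Fin m)) :
    bProb n m p (fun ω => ∀ j ∈ S, ω i j = true) = p ^ S.card := by
  unfold bProb
  beta_reduce
  have main : (∑ ω : Fin n → Fin m → Bool, ∏ i', ∏ j,
      (if i' = i ∧ j ∈ S then (if ω i' j then p else 0)
        else (if ω i' j then p else 1 - p))) = p ^ S.card := by
    rw [sum_prod_prod n m (fun i2 j b => if i2 = i ∧ j ∈ S then (if b then p else 0) else (if b then p else 1 - p))]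
    have h2 : ∀ i' : Fin n, (∏ j, ((if i' = i ∧ j ∈ S then (if true then p else 0)
        else (if true then p else 1 - p)) + (if i' = i ∧ j ∈ S then (if false then p else 0)
        else (if false then p else 1 - p)))) = if i' = i then p ^ S.card else 1 := by
      intro i'
      by_cases h : i' = i
      · subst h
        rw [if_pos rfl]
        have : ∀ j : Fin m, ((if i' = i' ∧ j ∈ S then p else p) + (if i' = i' ∧ j ∈ S then 0 else 1 - p)) = if j ∈ S then p else 1 := by
          intro j; by_cases hj : j ∈ S <;> simp [hj] <;> ring
        rw [Finset.prod_congr rfl fun j _ => by simpa using this j]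
        rw [Finset.prod_ite_mem, Finset.univ_inter, Finset.prod_const]
        simp
      · rw [if_neg h]
        have : ∀ j : Fin m, ¬ (i' = i ∧ j ∈ S) := fun j hc => h hc.1
        simp [this]
    rw [Finset.prod_congr rfl fun i' _ => by simpa using h2 i']
    simp
  refine Eq.trans (Finset.sum_congr rfl fun ω _ => ?_) main
  by_cases h : ∀ j ∈ S, ω i j = true
  · rw [if_pos h]
    unfold bWeight
    refine Finset.prod_congr rfl fun i' _ => Finset.prod_congr rfl fun j _ => ?_
    by_cases hc : i' = i ∧ j ∈ S
    · obtain ⟨h1, h2⟩ := hc; subst h1; simp [h j h2]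
    · rw [if_neg hc]
  · rw [if_neg h]
    push_neg at h
    obtain ⟨j, hj, hfalse⟩ := h
    refine (Finset.prod_eq_zero (Finset.mem_univ i) ?_).symm
    refine Finset.prod_eq_zero (Finset.mem_univ j) ?_
    simp [hj, hfalse]

section
variable {n m : ℕ} {p : ℝ}

lemma bProb_congr {P Q : (Fin n → Fin m → Bool) → Prop} (h : ∀ ω, P ω ↔ Q ω) :
    bProb n m p P = bProb n m p Q := by
  refine Finset.sum_congr rfl fun ω _ => ?_
  by_cases hP : P ω
  · rw [if_pos hP, if_pos ((h ω).mp hP)]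
  · rw [if_neg hP, if_neg (fun hQ => hP ((h ω).mpr hQ))]

lemma Xvar_le (ω : Fin n → Fin m → Bool) (i : Fin n) : Xvar ω i ≤ m := by
  unfold Xvar
  exact le_trans (Finset.card_filter_le _ _) (by simp)

lemma maxX_le (ω : Fin n → Fin m → Bool) : maxX ω ≤ m :=
  Finset.sup_le fun i _ => Xvar_le ω i

lemma expMax_lower (hp0 : 0 ≤ p) (hp1 : p ≤ 1) (hn : 0 < n) :
    (m : ℝ) * p ≤ expMax n m p := by
  set i₀ : Fin n := ⟨0, hn⟩
  have step1 : ∑ ω : Fin n → Fin m → Bool, bWeight n m p ω * (Xvar ω i₀ : ℝ)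
      ≤ expMax n m p := by
    refine Finset.sum_le_sum fun ω _ => ?_
    refine mul_le_mul_of_nonneg_left ?_ (bWeight_nonneg hp0 hp1 ω)
    exact_mod_cast Finset.le_sup (f := Xvar ω) (Finset.mem_univ i₀)
  refine le_trans (le_of_eq ?_) step1
  have expand : ∀ ω : Fin n → Fin m → Bool,
      bWeight n m p ω * (Xvar ω i₀ : ℝ)
        = ∑ j : Fin m, (if ω i₀ j = true then bWeight n m p ω else 0) := by
    intro ω
    have : (Xvar ω i₀ : ℝ) = ∑ j : Fin m, (if ω i₀ j = true then (1:ℝ) else 0) := by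
      unfold Xvar
      rw [Finset.card_filter]
      push_cast
      rfl
    rw [this, Finset.mul_sum]
    refine Finset.sum_congr rfl fun j _ => ?_
    by_cases h : ω i₀ j = true <;> simp [h]
  rw [Finset.sum_congr rfl fun ω _ => expand ω, Finset.sum_comm]
  have : ∀ j : Fin m, ∑ ω : Fin n → Fin m → Bool, (if ω i₀ j = true then bWeight n m p ω else 0) = p := by
    intro j
    have h1 : bProb n m p (fun ω => ∀ j' ∈ ({j} : Finset (Fin m)), ω i₀ j' = true) = p ^ (1:ℕ) := by
      rw [← Finset.card_singleton j]
      exact bProb_forall_true hp0 hp1 i₀ {j}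
    rw [pow_one] at h1
    refine Eq.trans ?_ h1
    unfold bProb
    refine Finset.sum_congr rfl fun ω _ => ?_
    by_cases h : ω i₀ j = true
    · rw [if_pos h, if_pos (by simpa using h)]
    · rw [if_neg h, if_neg (by simpa using h)]
  rw [Finset.sum_congr rfl fun j _ => this j]
  simp [mul_comm]

lemma expMax_eq : expMax n m p
    = ∑ k ∈ Finset.Icc 1 m, bProb n m p (fun ω => k ≤ maxX ω) := by
  unfold expMax bProb
  rw [Finset.sum_comm]
  refine Finset.sum_congr rfl fun ω _ => ?_
  have hcard : ∀ a : ℕ, a ≤ m → ((Finset.Icc 1 m).filter (fun k => k ≤ a)) = Finset.Icc 1 a := by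
    intro a ha
    ext k
    simp only [Finset.mem_filter, Finset.mem_Icc]
    omega
  calc bWeight n m p ω * (maxX ω : ℝ)
      = (∑ k ∈ Finset.Icc 1 m, if k ≤ maxX ω then (1:ℝ) else 0) * bWeight n m p ω := by
        rw [Finset.sum_boole, hcard _ (maxX_le ω)]
        rw [mul_comm]
        congr 1
        rw [Nat.card_Icc]
        simp
    _ = ∑ k ∈ Finset.Icc 1 m, (if k ≤ maxX ω then bWeight n m p ω else 0) := by
        rw [Finset.sum_mul]
        refine Finset.sum_congr rfl fun k _ => ?_
        by_cases h : k ≤ maxX ω <;> simp [h]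
    _ = _ := by
        refine Finset.sum_congr rfl fun k _ => ?_
        by_cases h : k ≤ maxX ω
        · rw [if_pos h, if_pos h]
        · rw [if_neg h, if_neg h]

lemma bProb_tail_le (hp0 : 0 ≤ p) (hp1 : p ≤ 1) (hn : 0 < n) {k : ℕ} (hk : 1 ≤ k) :
    bProb n m p (fun ω => k ≤ maxX ω) ≤ (n : ℝ) * ((m.choose k : ℝ) * p ^ k) := by
  haveI : Nonempty (Fin n) := ⟨⟨0, hn⟩⟩
  have step1 : bProb n m p (fun ω => k ≤ maxX ω)
      ≤ ∑ i : Fin n, bProb n m p (fun ω => k ≤ Xvar ω i) := by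
    refine le_trans (bProb_mono hp0 hp1 (fun ω h => ?_))
      (bProb_exists_le hp0 hp1 Finset.univ (fun i ω => k ≤ Xvar ω i))
    obtain ⟨i, _, hi⟩ := Finset.exists_mem_eq_sup Finset.univ Finset.univ_nonempty (Xvar ω)
    exact ⟨i, Finset.mem_univ i, by rw [← hi]; exact h⟩
  have step2 : ∀ i : Fin n, bProb n m p (fun ω => k ≤ Xvar ω i)
      ≤ (m.choose k : ℝ) * p ^ k := by
    intro i
    have h1 : bProb n m p (fun ω => k ≤ Xvar ω i)
        ≤ ∑ S ∈ Finset.powersetCard k (Finset.univ : Finset (Fin m)),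
            bProb n m p (fun ω => ∀ j ∈ S, ω i j = true) := by
      refine le_trans (bProb_mono hp0 hp1 (fun ω h => ?_))
        (bProb_exists_le hp0 hp1 _ (fun S ω => ∀ j ∈ S, ω i j = true))
      obtain ⟨S, hS, hcard⟩ := Finset.exists_subset_card_eq h
      refine ⟨S, Finset.mem_powersetCard.mpr ⟨Finset.subset_univ S, hcard⟩, fun j hj => ?_⟩
      have := hS hj
      simpa using (Finset.mem_filter.mp this).2
    refine le_trans h1 (le_of_eq ?_)
    rw [Finset.sum_congr rfl fun S hS => ?_]
    · rw [Finset.sum_const, Finset.card_powersetCard, Finset.card_univ, Fintype.card_fin,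
        nsmul_eq_mul]
    · rw [bProb_forall_true hp0 hp1 i S, (Finset.mem_powersetCard.mp hS).2]
  calc bProb n m p (fun ω => k ≤ maxX ω) ≤ ∑ i : Fin n, bProb n m p (fun ω => k ≤ Xvar ω i) := step1
    _ ≤ ∑ _i : Fin n, (m.choose k : ℝ) * p ^ k := Finset.sum_le_sum fun i _ => step2 i
    _ = (n : ℝ) * ((m.choose k : ℝ) * p ^ k) := by
        rw [Finset.sum_const, Finset.card_univ, Fintype.card_fin, nsmul_eq_mul]
end

lemma pow_div_fact_le_exp {x : ℝ} (hx : 0 ≤ x) (k : ℕ) :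
    x ^ k / (Nat.factorial k : ℝ) ≤ Real.exp x := by
  refine le_trans ?_ (Real.sum_le_exp_of_nonneg hx (k + 1))
  refine Finset.single_le_sum (f := fun i => x ^ i / (Nat.factorial i : ℝ)) (fun i _ => ?_)
    (Finset.self_mem_range_succ k)
  positivity

lemma decay_bound {μ : ℝ} (hμ : 0 ≤ μ) {t₀ : ℕ} (ht₀ : 2 * μ ≤ t₀) :
    ∀ k, t₀ ≤ k → μ ^ k / (Nat.factorial k : ℝ) ≤ Real.exp μ * (1 / 2) ^ (k - t₀) := by
  refine Nat.le_induction ?_ ?_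
  · simpa using pow_div_fact_le_exp hμ t₀
  · intro k hk ih
    have hfact : (0 : ℝ) < (Nat.factorial k : ℝ) := by positivity
    have hstep : μ ^ (k + 1) / (Nat.factorial (k + 1) : ℝ)
        = (μ ^ k / (Nat.factorial k : ℝ)) * (μ / (k + 1)) := by
      rw [Nat.factorial_succ]
      push_cast
      field_simp
      ring
    have hratio : μ / (k + 1) ≤ 1 / 2 := by
      rw [div_le_div_iff₀ (by positivity) (by norm_num)]
      have : (t₀ : ℝ) ≤ (k : ℝ) := by exact_mod_cast hk
      linarith
    rw [hstep]
    have h1 : (μ ^ k / (Nat.factorial k : ℝ)) * (μ / (k + 1))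
        ≤ (Real.exp μ * (1 / 2) ^ (k - t₀)) * (1 / 2) := by
      refine mul_le_mul ih hratio (by positivity) (by positivity)
    refine le_trans h1 (le_of_eq ?_)
    rw [Nat.succ_sub hk, pow_succ, mul_assoc]

lemma geom_tail_le (a b : ℕ) : ∑ k ∈ Finset.Icc a b, ((1:ℝ) / 2) ^ k ≤ 2 * (1 / 2) ^ a := by
  have h1 : Finset.Icc a b ⊆ Finset.Ico a (b + 1) := by
    intro k hk
    simp only [Finset.mem_Icc] at hk
    simp only [Finset.mem_Ico]
    omega
  have h2 : ∑ k ∈ Finset.Icc a b, ((1:ℝ) / 2) ^ k ≤ ∑ k ∈ Finset.Ico a (b + 1), ((1:ℝ) / 2) ^ k :=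
    Finset.sum_le_sum_of_subset_of_nonneg h1 (fun k _ _ => by positivity)
  refine le_trans h2 ?_
  rw [Finset.sum_Ico_eq_sum_range]
  have h3 : ∀ j : ℕ, ((1:ℝ) / 2) ^ (a + j) = (1 / 2) ^ a * (1 / 2) ^ j := fun j => pow_add _ _ _
  rw [Finset.sum_congr rfl fun j _ => h3 j, ← Finset.mul_sum, mul_comm]
  refine mul_le_mul_of_nonneg_right ?_ (by positivity)
  have := geom_sum_eq (by norm_num : ((1:ℝ)/2) ≠ 1) (b + 1 - a)
  rw [this]
  have hpow : (0:ℝ) ≤ (1/2) ^ (b + 1 - a) := by positivity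
  have hpow1 : ((1:ℝ)/2) ^ (b + 1 - a) ≤ 1 := pow_le_one₀ (by norm_num) (by norm_num)
  rw [div_le_iff_of_neg (by norm_num : ((1:ℝ)/2) - 1 < 0)]
  linarith

lemma expMax_upper {n m : ℕ} {p : ℝ} (hp0 : 0 ≤ p) (hp1 : p ≤ 1) (hn : 1 ≤ n)
    (hμ1 : 1 ≤ (m : ℝ) * p) :
    expMax n m p ≤ ((⌈2 * ((m : ℝ) * p)⌉₊ : ℝ)
      + (⌈(((m : ℝ) * p) + 2 * Real.log n) / Real.log 2⌉₊ : ℝ)) + (m : ℝ) * p := by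
  set μ : ℝ := (m : ℝ) * p with hμdef
  have hμ0 : 0 ≤ μ := le_trans zero_le_one hμ1
  set t₀ : ℕ := ⌈2 * μ⌉₊ with ht₀def
  set s : ℕ := ⌈(μ + 2 * Real.log n) / Real.log 2⌉₊ with hsdef
  set t : ℕ := t₀ + s with htdef
  have hn0 : 0 < n := hn
  have hlogn : 0 ≤ Real.log n := Real.log_natCast_nonneg n
  have ht₀ : 2 * μ ≤ (t₀ : ℝ) := Nat.le_ceil _
  -- decompose
  rw [expMax_eq]
  have hsplit := Finset.sum_filter_add_sum_filter_not (Finset.Icc 1 m)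
    (fun k => k ≤ t) (fun k => bProb n m p (fun ω => k ≤ maxX ω))
  rw [← hsplit]
  have part1 : ∑ k ∈ (Finset.Icc 1 m).filter (fun k => k ≤ t),
      bProb n m p (fun ω => k ≤ maxX ω) ≤ (t : ℝ) := by
    calc ∑ k ∈ (Finset.Icc 1 m).filter (fun k => k ≤ t), bProb n m p (fun ω => k ≤ maxX ω)
        ≤ ∑ _k ∈ (Finset.Icc 1 m).filter (fun k => k ≤ t), (1:ℝ) :=
          Finset.sum_le_sum fun k _ => bProb_le_one hp0 hp1 _
      _ = (((Finset.Icc 1 m).filter (fun k => k ≤ t)).card : ℝ) := by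
          rw [Finset.sum_const, nsmul_eq_mul, mul_one]
      _ ≤ (t : ℝ) := by
          have hsub : (Finset.Icc 1 m).filter (fun k => k ≤ t) ⊆ Finset.Icc 1 t := by
            intro k hk
            simp only [Finset.mem_filter, Finset.mem_Icc] at hk ⊢
            omega
          have := Finset.card_le_card hsub
          rw [Nat.card_Icc] at this
          exact_mod_cast le_trans this (by omega)
  have part2 : ∑ k ∈ (Finset.Icc 1 m).filter (fun k => ¬ k ≤ t),
      bProb n m p (fun ω => k ≤ maxX ω) ≤ μ := by
    have hterm : ∀ k ∈ (Finset.Icc 1 m).filter (fun k => ¬ k ≤ t),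
        bProb n m p (fun ω => k ≤ maxX ω)
          ≤ (n : ℝ) * Real.exp μ * ((2:ℝ) ^ t₀ * (1 / 2) ^ k) := by
      intro k hk
      simp only [Finset.mem_filter, Finset.mem_Icc, not_le] at hk
      obtain ⟨⟨hk1, hkm⟩, hkt⟩ := hk
      have hkt₀ : t₀ ≤ k := by omega
      have h1 : bProb n m p (fun ω => k ≤ maxX ω) ≤ (n : ℝ) * ((m.choose k : ℝ) * p ^ k) :=
        bProb_tail_le hp0 hp1 hn0 hk1
      have h2 : (m.choose k : ℝ) * p ^ k ≤ μ ^ k / (Nat.factorial k : ℝ) := by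
        have hc : (m.choose k : ℝ) ≤ (m:ℝ) ^ k / (Nat.factorial k : ℝ) := by
          have := Nat.choose_le_pow_div (α := ℝ) k m
          simpa using this
        have hpk : (0:ℝ) ≤ p ^ k := by positivity
        calc (m.choose k : ℝ) * p ^ k ≤ ((m:ℝ) ^ k / (Nat.factorial k : ℝ)) * p ^ k :=
              mul_le_mul_of_nonneg_right hc hpk
          _ = μ ^ k / (Nat.factorial k : ℝ) := by
              rw [hμdef, mul_pow]; ring
      have h3 : μ ^ k / (Nat.factorial k : ℝ) ≤ Real.exp μ * (1 / 2) ^ (k - t₀) :=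
        decay_bound hμ0 ht₀ k hkt₀
      have h4 : ((1:ℝ) / 2) ^ (k - t₀) = (2:ℝ) ^ t₀ * (1 / 2) ^ k := by
        have : ((1:ℝ) / 2) ^ (k - t₀) * (1 / 2) ^ t₀ = (1 / 2) ^ k := by
          rw [← pow_add, Nat.sub_add_cancel hkt₀]
        have h2t : ((1:ℝ) / 2) ^ t₀ = ((2:ℝ) ^ t₀)⁻¹ := by
          rw [div_pow, one_pow, one_div]
        field_simp at this ⊢
        have h2' : ((1:ℝ)/2)^t₀ * 2^t₀ = 1 := by rw [h2t]; exact inv_mul_cancel₀ (by positivity)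
        linear_combination (2:ℝ)^t₀ * this - ((1:ℝ)/2)^(k-t₀) * h2'
      calc bProb n m p (fun ω => k ≤ maxX ω) ≤ (n : ℝ) * ((m.choose k : ℝ) * p ^ k) := h1
        _ ≤ (n : ℝ) * (Real.exp μ * (1 / 2) ^ (k - t₀)) := by
            refine mul_le_mul_of_nonneg_left (le_trans h2 h3) (by positivity)
        _ = (n : ℝ) * Real.exp μ * ((2:ℝ) ^ t₀ * (1 / 2) ^ k) := by rw [h4]; ring
    have hgeom : ∑ k ∈ (Finset.Icc 1 m).filter (fun k => ¬ k ≤ t), ((1:ℝ) / 2) ^ k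
        ≤ 2 * (1 / 2) ^ (t + 1) := by
      refine le_trans (Finset.sum_le_sum_of_subset_of_nonneg ?_ (fun k _ _ => by positivity))
        (geom_tail_le (t + 1) m)
      intro k hk
      simp only [Finset.mem_filter, Finset.mem_Icc, not_le] at hk
      simp only [Finset.mem_Icc]
      omega
    calc ∑ k ∈ (Finset.Icc 1 m).filter (fun k => ¬ k ≤ t), bProb n m p (fun ω => k ≤ maxX ω)
        ≤ ∑ k ∈ (Finset.Icc 1 m).filter (fun k => ¬ k ≤ t),
            (n : ℝ) * Real.exp μ * ((2:ℝ) ^ t₀ * (1 / 2) ^ k) := Finset.sum_le_sum hterm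
      _ = (n : ℝ) * Real.exp μ * (2:ℝ) ^ t₀
            * ∑ k ∈ (Finset.Icc 1 m).filter (fun k => ¬ k ≤ t), ((1:ℝ) / 2) ^ k := by
          rw [Finset.mul_sum]
          exact Finset.sum_congr rfl fun k _ => by ring
      _ ≤ (n : ℝ) * Real.exp μ * (2:ℝ) ^ t₀ * (2 * (1 / 2) ^ (t + 1)) := by
          refine mul_le_mul_of_nonneg_left hgeom (by positivity)
      _ = (n : ℝ) * Real.exp μ * (1 / 2) ^ s := by
          have : ((1:ℝ)/2) ^ (t + 1) = (1/2) ^ t₀ * (1/2) ^ s * (1/2) := by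
            rw [htdef, pow_add, pow_add, pow_one]
          rw [this]
          have h2t : ((2:ℝ) ^ t₀) * ((1:ℝ)/2) ^ t₀ = 1 := by
            rw [div_pow, one_pow]
            field_simp
          field_simp
          nlinarith [h2t, Real.exp_pos μ, pow_pos (by norm_num : (0:ℝ) < 1/2) s, pow_pos (by norm_num : (0:ℝ) < 2) t₀]
      _ ≤ μ := by
          have hs_ge : (μ + 2 * Real.log n) / Real.log 2 ≤ (s : ℝ) := Nat.le_ceil _
          have hlog2 : (0:ℝ) < Real.log 2 := Real.log_pos (by norm_num)
          have hs2 : μ + 2 * Real.log n ≤ (s : ℝ) * Real.log 2 := by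
            rw [div_le_iff₀ hlog2] at hs_ge
            linarith
          have hhalf : ((1:ℝ)/2) ^ s = Real.exp (-((s:ℝ) * Real.log 2)) := by
            rw [show ((1:ℝ)/2) ^ s = Real.exp (Real.log (((1:ℝ)/2) ^ s)) from
              (Real.exp_log (by positivity)).symm, Real.log_pow]
            congr 1
            rw [one_div, Real.log_inv]
            push_cast
            ring
          have hne : (0:ℝ) < (n:ℝ) := by exact_mod_cast hn0
          have hfinal : (n : ℝ) * Real.exp μ * (1 / 2) ^ s ≤ μ := by
            rw [hhalf, mul_assoc, ← Real.exp_add]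
            have hexp : Real.exp (μ + -((s:ℝ) * Real.log 2)) ≤ Real.exp (-(2 * Real.log n)) := by
              refine Real.exp_le_exp.mpr ?_
              linarith
            have h5 : (n:ℝ) * Real.exp (μ + -((s:ℝ) * Real.log 2))
                ≤ (n:ℝ) * Real.exp (-(2 * Real.log n)) :=
              mul_le_mul_of_nonneg_left hexp (le_of_lt hne)
            have h6 : Real.exp (-(2 * Real.log n)) = 1 / ((n:ℝ) * (n:ℝ)) := by
              rw [Real.exp_neg, show (2:ℝ) * Real.log n = Real.log n + Real.log n by ring,
                Real.exp_add, Real.exp_log hne, one_div]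
            have h7 : (n:ℝ) * (1 / ((n:ℝ) * (n:ℝ))) = 1 / (n:ℝ) := by
              field_simp
            have h8 : 1 / (n:ℝ) ≤ 1 := by
              rw [div_le_one hne]
              exact_mod_cast hn
            calc (n:ℝ) * Real.exp (μ + -((s:ℝ) * Real.log 2))
                ≤ (n:ℝ) * Real.exp (-(2 * Real.log n)) := h5
              _ = 1 / (n:ℝ) := by rw [h6, h7]
              _ ≤ 1 := h8
              _ ≤ μ := hμ1
          exact hfinal
  have hcast : (t:ℝ) = (t₀:ℝ) + (s:ℝ) := by rw [htdef]; push_cast; ring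
  linarith [part1, part2]

/-- In the dense regime (`mp ≥ c₃ log n`), the expected maximum of `n`
i.i.d. Binomial(m,p) variables satisfies `mp ≤ E[max_i X_i] ≤ c₂ mp` for large `n`. -/
theorem stmt9 (m : ℕ → ℕ) (p : ℕ → ℝ) (δ : ℝ)
    (hδ : 0 < δ ∧ δ < 1)
    (hp0 : ∀ n, 0 < p n ∧ p n ≤ 1)
    (hm : ∃ c C : ℝ, 0 < c ∧ 0 < C ∧ ∃ N : ℕ, ∀ n ≥ N,
      c * (n : ℝ) ^ c ≤ (m n : ℝ) ∧ (m n : ℝ) ≤ C * (n : ℝ) ^ C)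
    (hp : ∃ N : ℕ, ∀ n ≥ N, (n : ℝ) ^ (-δ) ≤ p n ∧ p n ≤ 1 / 2)
    (c₃ : ℝ) (hc₃ : 0 < c₃)
    (hdense : ∃ N : ℕ, ∀ n ≥ N, c₃ * Real.log n ≤ (m n : ℝ) * p n) :
    ∃ c₂ : ℝ, 0 < c₂ ∧ ∃ N : ℕ, ∀ n ≥ N,
      (m n : ℝ) * p n ≤ expMax n (m n) (p n) ∧
      expMax n (m n) (p n) ≤ c₂ * ((m n : ℝ) * p n) := by
  obtain ⟨Nd, hNd⟩ := hdense
  refine ⟨7 + 4 / c₃, by positivity, Nd + ⌈Real.exp (1 / c₃)⌉₊ + 1, fun n hn => ?_⟩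
  have hn0 : 0 < n := by omega
  have hn1 : 1 ≤ n := hn0
  have hpn0 : 0 ≤ p n := (hp0 n).1.le
  have hpn1 : p n ≤ 1 := (hp0 n).2
  set μ : ℝ := (m n : ℝ) * p n with hμdef
  have hdn : c₃ * Real.log n ≤ μ := hNd n (by omega)
  have hexp_le : Real.exp (1 / c₃) ≤ (n : ℝ) := by
    refine le_trans (Nat.le_ceil _) ?_
    exact_mod_cast Nat.le_of_lt (by omega)
  have hlogn_ge : 1 / c₃ ≤ Real.log n := by
    have := Real.log_le_log (Real.exp_pos _) hexp_le
    rwa [Real.log_exp] at this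
  have hlogn0 : 0 ≤ Real.log n := le_trans (by positivity) hlogn_ge
  have hμ1 : 1 ≤ μ := by
    calc (1:ℝ) = c₃ * (1 / c₃) := by field_simp
      _ ≤ c₃ * Real.log n := mul_le_mul_of_nonneg_left hlogn_ge hc₃.le
      _ ≤ μ := hdn
  constructor
  · exact expMax_lower hpn0 hpn1 hn0
  · have hup := expMax_upper (n := n) (m := m n) (p := p n) hpn0 hpn1 hn1 hμ1
    have hc1 : (⌈2 * μ⌉₊ : ℝ) ≤ 2 * μ + 1 :=
      (Nat.ceil_lt_add_one (by positivity)).le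
    have hlog2 : (1:ℝ) / 2 < Real.log 2 := by
      have := Real.log_two_gt_d9
      linarith
    have hlog2pos : (0:ℝ) < Real.log 2 := by linarith
    have harg0 : (0:ℝ) ≤ (μ + 2 * Real.log n) / Real.log 2 := by positivity
    have hc2 : (⌈(μ + 2 * Real.log n) / Real.log 2⌉₊ : ℝ)
        ≤ (μ + 2 * Real.log n) / Real.log 2 + 1 :=
      (Nat.ceil_lt_add_one harg0).le
    have hdiv : (μ + 2 * Real.log n) / Real.log 2 ≤ 2 * (μ + 2 * Real.log n) := by
      rw [div_le_iff₀ hlog2pos]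
      nlinarith [hlogn0, hμ1]
    have hlogn_le : Real.log n ≤ μ / c₃ := by
      rw [le_div_iff₀ hc₃]
      linarith [hdn]
    have hkey : μ / c₃ * 4 = 4 / c₃ * μ := by ring
    calc expMax n (m n) (p n)
        ≤ ((⌈2 * μ⌉₊ : ℝ) + (⌈(μ + 2 * Real.log n) / Real.log 2⌉₊ : ℝ)) + μ := hup
      _ ≤ (2 * μ + 1) + ((μ + 2 * Real.log n) / Real.log 2 + 1) + μ := by linarith
      _ ≤ (2 * μ + 1) + (2 * (μ + 2 * Real.log n) + 1) + μ := by linarith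
      _ ≤ 7 * μ + μ / c₃ * 4 := by linarith
      _ = (7 + 4 / c₃) * μ := by rw [hkey]; ring
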